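/- arXiv:1703.09813 — 6 statements merged into one kernel-verified Lean document; each statement's English description precedes it below -/
import Mathlib

section
/- Let L_T(θ, λ) be jointly continuous, convex in θ for each λ, with a unique minimizer θ̂(λ) for each λ in a neighborhood W of λ₀. Suppose S is a linear subspace of ℝ^p such that for all λ ∈ W, argmin_θ L_T(θ, λ) = argmin_{θ ∈ S} L_T(θ, λ), and suppose L_T restricted to S × W is twice continuously differentiable with, at (θ̂(λ₀), λ₀), a positive-definite Hessian in the S-directions. Then there is a neighborhood U ⊆ W of λ₀ on which λ ↦ θ̂(λ) is continuously differentiable. -/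
open Filter Matrix

lemma aux_isMinOn_of_fderiv_zero {E : Type*} [NormedAddCommGroup E] [NormedSpace ℝ E]
    {φ : E → ℝ} (hφ : ConvexOn ℝ Set.univ φ) {x : E}
    (hd : HasFDerivAt φ (0 : E →L[ℝ] ℝ) x) : IsMinOn φ Set.univ x := by
  rw [isMinOn_iff]
  intro y _
  set ψ : ℝ → ℝ := fun t => φ (t • (y - x) + x) with hψdef
  have hconvψ : ConvexOn ℝ Set.univ ψ := by
    have h1 := hφ.comp_affineMap (AffineMap.lineMap x y : ℝ →ᵃ[ℝ] E)
    have h2 : (φ ∘ (AffineMap.lineMap x y : ℝ →ᵃ[ℝ] E)) = ψ := by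
      funext t
      simp [hψdef, AffineMap.lineMap_apply_module']
    rw [h2, Set.preimage_univ] at h1
    exact h1
  have hin : HasDerivAt (fun t : ℝ => t • (y - x) + x) (y - x) 0 := by
    simpa using ((hasDerivAt_id (0 : ℝ)).smul_const (y - x)).add_const x
  have hd' : HasFDerivAt φ (0 : E →L[ℝ] ℝ) ((fun t : ℝ => t • (y - x) + x) 0) := by
    simpa using hd
  have hψd : HasDerivAt ψ 0 0 := by
    have h := hd'.comp_hasDerivAt 0 hin
    simp at h
    exact h
  have hs := hconvψ.le_slope_of_hasDerivAt (Set.mem_univ (0 : ℝ)) (Set.mem_univ (1 : ℝ))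
    one_pos hψd
  have h0 : ψ 0 = φ x := by simp [hψdef]
  have h1 : ψ 1 = φ y := by simp [hψdef]
  rw [slope_def_field] at hs
  simp [h0, h1] at hs
  linarith

set_option maxHeartbeats 2000000 in
/-- If `L_T(θ, λ)` is jointly continuous, convex in `θ`, has a unique minimizer
`θ̂(λ)` for `λ` in a neighborhood `W` of `λ₀`, a linear subspace `S` (with orthonormal basis the
columns of `Umat`) is a local optimality space on `W`, `L_T` restricted to `S × W` is `C²`, and
the Hessian in the `S`-directions at `(θ̂(λ₀), λ₀)` is positive definite, then `θ̂` is
continuously differentiable on a neighborhood `U ⊆ W` of `λ₀`. -/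
theorem argmin_smooth_on_local_optimality_space {p J q : ℕ}
    (LT : (Fin p → ℝ) → (Fin J → ℝ) → ℝ)
    (θhat : (Fin J → ℝ) → (Fin p → ℝ))
    (lam₀ : Fin J → ℝ) (W : Set (Fin J → ℝ)) (hW : IsOpen W) (hlam₀ : lam₀ ∈ W)
    (S : Submodule ℝ (Fin p → ℝ))
    (Umat : Matrix (Fin p) (Fin q) ℝ)
    (hortho : Umatᵀ * Umat = 1)
    (hspan : S = Submodule.span ℝ (Set.range fun j => fun i => Umat i j)
    )
    (hcont : Continuous (fun x : (Fin p → ℝ) × (Fin J → ℝ) => LT x.1 x.2))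
    (hconv : ∀ lam, ConvexOn ℝ Set.univ (fun θ => LT θ lam))
    (hmin : ∀ lam ∈ W, IsMinOn (fun θ => LT θ lam) Set.univ (θhat lam))
    (huniq : ∀ lam ∈ W, ∀ θ, IsMinOn (fun θ' => LT θ' lam) Set.univ θ → θ = θhat lam)
    (hlocopt : ∀ lam ∈ W,
      {θ | IsMinOn (fun θ' => LT θ' lam) Set.univ θ}
        = {θ | θ ∈ S ∧ IsMinOn (fun θ' => LT θ' lam) S θ})
    (hsmooth : ContDiffOn ℝ 2
      (fun x : (Fin q → ℝ) × (Fin J → ℝ) => LT (Umat.mulVec x.1) x.2)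
      (Set.univ ×ˢ W))
    (β₀ : Fin q → ℝ) (hβ₀ : Umat.mulVec β₀ = θhat lam₀)
    (hPD : ∀ v : Fin q → ℝ, v ≠ 0 →
      0 < iteratedFDeriv ℝ 2 (fun β => LT (Umat.mulVec β) lam₀) β₀ ![v, v]) :
    ∃ U : Set (Fin J → ℝ), U ⊆ W ∧ IsOpen U ∧ lam₀ ∈ U ∧ ContDiffOn ℝ 1 θhat U := by
  classical
  set f : (Fin q → ℝ) × (Fin J → ℝ) → ℝ := fun x => LT (Umat.mulVec x.1) x.2 with hfdef
  set Ω : Set ((Fin q → ℝ) × (Fin J → ℝ)) := Set.univ ×ˢ W with hΩdef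
  have hΩ : IsOpen Ω := isOpen_univ.prod hW
  -- the precomposition-with-inl operator
  set Λ : (((Fin q → ℝ) × (Fin J → ℝ)) →L[ℝ] ℝ) →L[ℝ] ((Fin q → ℝ) →L[ℝ] ℝ) :=
    (ContinuousLinearMap.compL ℝ (Fin q → ℝ) ((Fin q → ℝ) × (Fin J → ℝ)) ℝ).flip
      (ContinuousLinearMap.inl ℝ (Fin q → ℝ) (Fin J → ℝ)) with hΛdef
  have hΛapp : ∀ (L : ((Fin q → ℝ) × (Fin J → ℝ)) →L[ℝ] ℝ),
      Λ L = L.comp (ContinuousLinearMap.inl ℝ (Fin q → ℝ) (Fin J → ℝ)) := fun L => rfl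
  set g : (Fin q → ℝ) × (Fin J → ℝ) → ((Fin q → ℝ) →L[ℝ] ℝ) :=
    fun x => Λ (fderiv ℝ f x) with hgdef
  have hf'1 : ContDiffOn ℝ 1 (fderiv ℝ f) Ω := hsmooth.fderiv_of_isOpen hΩ (by norm_num)
  have hg1 : ContDiffOn ℝ 1 g Ω := Λ.contDiff.comp_contDiffOn hf'1
  -- partial derivative in β
  have hpartial : ∀ x ∈ Ω, HasFDerivAt (fun β => f (β, x.2)) (g x) x.1 := by
    intro x hx
    have hdfx : DifferentiableAt ℝ f x :=
      (hsmooth.differentiableOn (by norm_num)).differentiableAt (hΩ.mem_nhds hx)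
    have hdf : HasFDerivAt f (fderiv ℝ f x) ((fun β : Fin q → ℝ => (β, x.2)) x.1) := by
      simpa using hdfx.hasFDerivAt
    have hι := hasFDerivAt_prodMk_left (𝕜 := ℝ) x.1 x.2
    have := hdf.comp x.1 hι
    exact this
  set x₀ : (Fin q → ℝ) × (Fin J → ℝ) := (β₀, lam₀) with hx₀def
  have hx₀ : x₀ ∈ Ω := ⟨Set.mem_univ _, hlam₀⟩
  -- stationarity at x₀
  have hg0 : g x₀ = 0 := by
    have hmin₀ : IsMinOn (fun β => f (β, x₀.2)) Set.univ β₀ := by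
      rw [isMinOn_iff]
      intro β _
      have := (isMinOn_iff.mp (hmin lam₀ hlam₀)) (Umat.mulVec β) (Set.mem_univ _)
      simpa [hfdef, hβ₀] using this
    have hloc : IsLocalMin (fun β => f (β, x₀.2)) β₀ := hmin₀.isLocalMin Filter.univ_mem
    exact hloc.hasFDerivAt_eq_zero (hpartial x₀ hx₀)
  -- second derivative data
  have hdf'x₀ : DifferentiableAt ℝ (fderiv ℝ f) x₀ :=
    (hf'1.differentiableOn one_ne_zero).differentiableAt (hΩ.mem_nhds hx₀)
  set Dg : ((Fin q → ℝ) × (Fin J → ℝ)) →L[ℝ]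
      ((Fin q → ℝ) →L[ℝ] ℝ) := Λ.comp (fderiv ℝ (fderiv ℝ f) x₀) with hDgdef
  have hdg : HasFDerivAt g Dg x₀ := Λ.hasFDerivAt.comp x₀ hdf'x₀.hasFDerivAt
  set A : (Fin q → ℝ) →L[ℝ] ((Fin q → ℝ) →L[ℝ] ℝ) :=
    Dg.comp (ContinuousLinearMap.inl ℝ (Fin q → ℝ) (Fin J → ℝ)) with hAdef
  set B : (Fin J → ℝ) →L[ℝ] ((Fin q → ℝ) →L[ℝ] ℝ) :=
    Dg.comp (ContinuousLinearMap.inr ℝ (Fin q → ℝ) (Fin J → ℝ)) with hBdef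
  have hsplit : ∀ (v : Fin q → ℝ) (w : Fin J → ℝ), Dg (v, w) = A v + B w := by
    intro v w
    have h : ((v, w) : (Fin q → ℝ) × (Fin J → ℝ)) = (v, 0) + (0, w) := by simp
    rw [hAdef, hBdef]
    simp only [ContinuousLinearMap.comp_apply, ContinuousLinearMap.inl_apply,
      ContinuousLinearMap.inr_apply]
    rw [h, map_add]
  -- positive definiteness of A
  have hA : ∀ v : Fin q → ℝ, v ≠ 0 → 0 < A v v := by
    intro v hv
    have h1 : ∀ β, fderiv ℝ (fun β' => LT (Umat.mulVec β') lam₀) β =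
        g (β, lam₀) := by
      intro β
      have := hpartial (β, lam₀) ⟨Set.mem_univ _, hlam₀⟩
      exact this.fderiv
    have h2 : HasFDerivAt (fun β => g (β, lam₀)) A β₀ := by
      have hι := hasFDerivAt_prodMk_left (𝕜 := ℝ) β₀ lam₀
      exact hdg.comp β₀ hι
    have h3 : fderiv ℝ (fderiv ℝ (fun β' => LT (Umat.mulVec β') lam₀)) β₀ = A := by
      have : fderiv ℝ (fun β' => LT (Umat.mulVec β') lam₀) = fun β => g (β, lam₀) :=
        funext h1
      rw [this]
      exact h2.fderiv
    have := hPD v hv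
    rw [iteratedFDeriv_two_apply, h3] at this
    simpa using this
  -- A is bijective
  have hAinj : Function.Injective A := by
    intro a b hab
    by_contra hne
    have hab0 : A (a - b) = 0 := by rw [map_sub, hab, sub_self]
    have := hA (a - b) (sub_ne_zero.mpr hne)
    rw [hab0] at this
    simp at this
  have hrank : Module.finrank ℝ (Fin q → ℝ) =
      Module.finrank ℝ ((Fin q → ℝ) →L[ℝ] ℝ) := by
    have e : ((Fin q → ℝ) →ₗ[ℝ] ℝ) ≃ₗ[ℝ] ((Fin q → ℝ) →L[ℝ] ℝ) :=
      LinearMap.toContinuousLinearMap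
    rw [← e.finrank_eq, Module.finrank_linearMap]
    simp
  have hAbij : Function.Bijective (A : (Fin q → ℝ) →ₗ[ℝ] ((Fin q → ℝ) →L[ℝ] ℝ)) := by
    refine ⟨hAinj, ?_⟩
    exact (LinearMap.injective_iff_surjective_of_finrank_eq_finrank hrank).mp hAinj
  set Aeq : (Fin q → ℝ) ≃L[ℝ] ((Fin q → ℝ) →L[ℝ] ℝ) :=
    (LinearEquiv.ofBijective (A : (Fin q → ℝ) →ₗ[ℝ] ((Fin q → ℝ) →L[ℝ] ℝ)) hAbij).toContinuousLinearEquiv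
    with hAeqdef
  have hAeq : ∀ v, Aeq v = A v := fun v => rfl
  -- the big map Φ and its invertible derivative
  set Φ : (Fin q → ℝ) × (Fin J → ℝ) → ((Fin q → ℝ) →L[ℝ] ℝ) × (Fin J → ℝ) :=
    fun x => (g x, x.2) with hΦdef
  set DΦ : ((Fin q → ℝ) × (Fin J → ℝ)) →L[ℝ]
      (((Fin q → ℝ) →L[ℝ] ℝ) × (Fin J → ℝ)) :=
    Dg.prod (ContinuousLinearMap.snd ℝ (Fin q → ℝ) (Fin J → ℝ)) with hDΦdef
  set T' : (((Fin q → ℝ) →L[ℝ] ℝ) × (Fin J → ℝ)) →L[ℝ]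
      ((Fin q → ℝ) × (Fin J → ℝ)) :=
    ((Aeq.symm : ((Fin q → ℝ) →L[ℝ] ℝ) →L[ℝ] (Fin q → ℝ)).comp
      ((ContinuousLinearMap.fst ℝ ((Fin q → ℝ) →L[ℝ] ℝ) (Fin J → ℝ)) -
        B.comp (ContinuousLinearMap.snd ℝ ((Fin q → ℝ) →L[ℝ] ℝ) (Fin J → ℝ)))).prod
      (ContinuousLinearMap.snd ℝ ((Fin q → ℝ) →L[ℝ] ℝ) (Fin J → ℝ)) with hT'def
  have hleft : Function.LeftInverse T' DΦ := by
    rintro ⟨v, w⟩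
    simp only [hDΦdef, hT'def, ContinuousLinearMap.prod_apply, ContinuousLinearMap.comp_apply,
      ContinuousLinearMap.coe_sub', Pi.sub_apply, ContinuousLinearMap.coe_fst',
      ContinuousLinearMap.coe_snd']
    refine Prod.ext ?_ rfl
    show Aeq.symm (Dg (v, w) - B w) = v
    rw [hsplit v w, add_sub_cancel_right, ← hAeq, ContinuousLinearEquiv.symm_apply_apply]
  have hright : Function.RightInverse T' DΦ := by
    rintro ⟨a, w⟩
    simp only [hDΦdef, hT'def, ContinuousLinearMap.prod_apply, ContinuousLinearMap.comp_apply,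
      ContinuousLinearMap.coe_sub', Pi.sub_apply, ContinuousLinearMap.coe_fst',
      ContinuousLinearMap.coe_snd']
    refine Prod.ext ?_ rfl
    show Dg (Aeq.symm (a - B w), w) = a
    rw [hsplit, ← hAeq, ContinuousLinearEquiv.apply_symm_apply, sub_add_cancel]
  set Teq : ((Fin q → ℝ) × (Fin J → ℝ)) ≃L[ℝ]
      (((Fin q → ℝ) →L[ℝ] ℝ) × (Fin J → ℝ)) :=
    ContinuousLinearEquiv.equivOfInverse DΦ T' hleft hright with hTeqdef
  have hΦ' : HasFDerivAt Φ (Teq : ((Fin q → ℝ) × (Fin J → ℝ)) →L[ℝ]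
      (((Fin q → ℝ) →L[ℝ] ℝ) × (Fin J → ℝ))) x₀ := by
    have : HasFDerivAt Φ DΦ x₀ := hdg.prodMk (hasFDerivAt_snd)
    exact this
  have hΦcd : ContDiffAt ℝ 1 Φ x₀ :=
    (hg1.contDiffAt (hΩ.mem_nhds hx₀)).prodMk contDiffAt_snd
  -- inverse function theorem
  have hstrict : HasStrictFDerivAt Φ (Teq : ((Fin q → ℝ) × (Fin J → ℝ)) →L[ℝ]
      (((Fin q → ℝ) →L[ℝ] ℝ) × (Fin J → ℝ))) x₀ := hΦcd.hasStrictFDerivAt' hΦ' one_ne_zero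
  set Ψ : (((Fin q → ℝ) →L[ℝ] ℝ) × (Fin J → ℝ)) → ((Fin q → ℝ) × (Fin J → ℝ)) :=
    hstrict.localInverse Φ Teq x₀ with hΨdef
  have hΨcd : ContDiffAt ℝ 1 Ψ (Φ x₀) := hΦcd.to_localInverse hΦ' one_ne_zero
  have hΦx₀ : Φ x₀ = (0, lam₀) := by
    rw [hΦdef]; exact Prod.ext hg0 rfl
  have hrinv : ∀ᶠ y in nhds ((0 : (Fin q → ℝ) →L[ℝ] ℝ), lam₀), Φ (Ψ y) = y := by
    rw [← hΦx₀]; exact hstrict.eventually_right_inverse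
  have hΨx₀ : Ψ (0, lam₀) = x₀ := by
    rw [← hΦx₀]; exact hstrict.localInverse_apply_image
  have hcont0 : Filter.Tendsto (fun lam : Fin J → ℝ => (((0 : (Fin q → ℝ) →L[ℝ] ℝ)), lam))
      (nhds lam₀) (nhds ((0 : (Fin q → ℝ) →L[ℝ] ℝ), lam₀)) :=
    (continuous_const.prodMk continuous_id).continuousAt
  have hev1 : ∀ᶠ lam in nhds lam₀, Φ (Ψ (0, lam)) = (0, lam) := hcont0.eventually hrinv
  have hev2 : ∀ᶠ lam in nhds lam₀, Ψ (0, lam) ∈ Ω := by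
    have hΨc : Filter.Tendsto (fun lam : Fin J → ℝ => Ψ (0, lam)) (nhds lam₀) (nhds x₀) := by
      have h1 : Filter.Tendsto Ψ (nhds ((0 : (Fin q → ℝ) →L[ℝ] ℝ), lam₀)) (nhds x₀) := by
        have := hΨcd.continuousAt
        rw [hΦx₀] at this
        rw [← hΨx₀]
        exact this.tendsto
      exact h1.comp hcont0
    exact hΨc.eventually (hΩ.eventually_mem hx₀)
  -- smoothness of the candidate solution
  set L : (Fin q → ℝ) →L[ℝ] (Fin p → ℝ) :=
    LinearMap.toContinuousLinearMap (Matrix.mulVecLin Umat) with hLdef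
  have hLapp : ∀ v, L v = Umat.mulVec v := fun v => rfl
  have hβcd : ContDiffAt ℝ 1 (fun lam => Umat.mulVec (Ψ (0, lam)).1) lam₀ := by
    have hΨ0cd : ContDiffAt ℝ 1 (fun lam : Fin J → ℝ => Ψ (0, lam)) lam₀ := by
      have h1 : ContDiffAt ℝ 1 Ψ ((0 : (Fin q → ℝ) →L[ℝ] ℝ), lam₀) := by
        rw [← hΦx₀]; exact hΨcd
      exact h1.comp lam₀ ((contDiff_const.prodMk contDiff_id).contDiffAt)
    have h2 : ContDiffAt ℝ 1 (fun x : (Fin q → ℝ) × (Fin J → ℝ) => L x.1)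
        (Ψ (0, lam₀)) := (L.contDiff.comp contDiff_fst).contDiffAt
    have h3 := h2.comp lam₀ hΨ0cd
    exact h3
  obtain ⟨u, hu, hucd⟩ := hβcd.contDiffOn le_rfl (by norm_num)
  -- assemble the neighborhood
  set s₁ : Set (Fin J → ℝ) := {lam | Φ (Ψ (0, lam)) = (0, lam)} with hs₁def
  set s₂ : Set (Fin J → ℝ) := {lam | Ψ (0, lam) ∈ Ω} with hs₂def
  have hmemnhds : u ∩ s₁ ∩ s₂ ∈ nhds lam₀ :=
    Filter.inter_mem (Filter.inter_mem hu hev1) hev2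
  set V := interior (u ∩ s₁ ∩ s₂) with hVdef
  have hVsub : V ⊆ u ∩ s₁ ∩ s₂ := interior_subset
  have hkey : ∀ lam ∈ V, lam ∈ W ∧ Umat.mulVec (Ψ (0, lam)).1 = θhat lam := by
    intro lam hlam
    obtain ⟨⟨hlu, hls₁⟩, hls₂⟩ := hVsub hlam
    set x := Ψ (0, lam) with hxdef
    have hxΩ : x ∈ Ω := hls₂
    have hΦx : Φ x = (0, lam) := hls₁
    have hgx : g x = 0 := congrArg Prod.fst hΦx
    have hx2 : x.2 = lam := congrArg Prod.snd hΦx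
    have hlamW : lam ∈ W := hx2 ▸ hxΩ.2
    refine ⟨hlamW, ?_⟩
    have hdd : HasFDerivAt (fun β => LT (Umat.mulVec β) lam)
        (0 : (Fin q → ℝ) →L[ℝ] ℝ) x.1 := by
      have h := hpartial x hxΩ
      rw [hgx, hx2] at h
      exact h
    have hconvφ : ConvexOn ℝ Set.univ (fun β => LT (Umat.mulVec β) lam) := by
      have := (hconv lam).comp_linearMap (Matrix.mulVecLin Umat)
      exact this
    have hminφ : IsMinOn (fun β => LT (Umat.mulVec β) lam) Set.univ x.1 :=
      aux_isMinOn_of_fderiv_zero hconvφ hdd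
    have hrangeS : ∀ θ ∈ S, ∃ β, Umat.mulVec β = θ := by
      intro θ hθ
      rw [hspan] at hθ
      have hθ' : θ ∈ LinearMap.range (Matrix.mulVecLin Umat) := by
        rw [Matrix.range_mulVecLin]
        convert hθ using 2
        all_goals rfl
      obtain ⟨β, hβ⟩ := hθ'
      exact ⟨β, hβ⟩
    have hmemS : Umat.mulVec x.1 ∈ S := by
      rw [hspan]
      have h := LinearMap.mem_range_self (Matrix.mulVecLin Umat) x.1
      rw [Matrix.range_mulVecLin] at h
      convert h using 2
      all_goals rfl
    have hminS : IsMinOn (fun θ' => LT θ' lam) S (Umat.mulVec x.1) := by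
      rw [isMinOn_iff]
      intro θ hθ
      obtain ⟨β', hβ'⟩ := hrangeS θ hθ
      have h := isMinOn_iff.mp hminφ β' (Set.mem_univ _)
      simpa [hβ'] using h
    have hglob : IsMinOn (fun θ' => LT θ' lam) Set.univ (Umat.mulVec x.1) := by
      have hmem : Umat.mulVec x.1 ∈ {θ | θ ∈ S ∧ IsMinOn (fun θ' => LT θ' lam) S θ} :=
        ⟨hmemS, hminS⟩
      rw [← hlocopt lam hlamW] at hmem
      exact hmem
    exact huniq lam hlamW _ hglob
  refine ⟨V, fun lam hlam => (hkey lam hlam).1, isOpen_interior,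
    mem_interior_iff_mem_nhds.mpr hmemnhds, ?_⟩
  have hVu : V ⊆ u := fun lam hlam => (hVsub hlam).1.1
  exact (hucd.mono hVu).congr fun lam hlam => ((hkey lam hlam).2).symm
end

section
/- Suppose θ̂(λ) minimizes the elastic net criterion (1/2)‖y_T − X_T θ‖² + λ₁‖θ‖₁ + (λ₂/2)‖θ‖₂² with λ₂ > 0, the support I of θ̂(λ) is locally constant in λ, and the restriction β̂(λ) (the nonzero coordinates) is differentiable in λ. Then ∂β̂(λ)/∂λ = −(X_{T,I}ᵀ X_{T,I} + λ₂ I)⁻¹ [sgn(β̂(λ)) , β̂(λ)], i.e., the column of the Jacobian with respect to λ₁ is −(X_{T,I}ᵀX_{T,I} + λ₂I)⁻¹ sgn(β̂(λ)) and with respect to λ₂ is −(X_{T,I}ᵀX_{T,I} + λ₂I)⁻¹ β̂(λ). -/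
open Matrix

/-- Implicit differentiation for the elastic net. If on a neighborhood `U` of
`λ = (λ₁, λ₂)` the restricted coefficients `β̂(μ)` (the nonzero coordinates, with locally
constant support/signs) satisfy the stationarity condition
`X_{T,I}ᵀ(X_{T,I} β̂ - y_T) + μ₁ sgn(β̂) + μ₂ β̂ = 0`, and `β̂` is differentiable at `λ`, then
the columns of the Jacobian are `-(X_{T,I}ᵀX_{T,I} + λ₂ I)⁻¹ sgn(β̂(λ))` (w.r.t. `λ₁`) and
`-(X_{T,I}ᵀX_{T,I} + λ₂ I)⁻¹ β̂(λ)` (w.r.t. `λ₂`). -/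
theorem elastic_net_jacobian {n : ℕ} {ι : Type*} [Fintype ι] [DecidableEq ι]
    (XTI : Matrix (Fin n) ι ℝ) (yT : Fin n → ℝ)
    (βhat : ℝ × ℝ → ι → ℝ)
    (lam : ℝ × ℝ) (hlam₂ : 0 < lam.2)
    (U : Set (ℝ × ℝ)) (hU : IsOpen U) (hlamU : lam ∈ U)
    (hsupp : ∀ μ ∈ U, ∀ i, Real.sign (βhat μ i) = Real.sign (βhat lam i))
    (hnz : ∀ i, βhat lam i ≠ 0)
    (hstat : ∀ μ ∈ U,
      XTIᵀ.mulVec (XTI.mulVec (βhat μ) - yT)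
        + μ.1 • (fun i => Real.sign (βhat μ i)) + μ.2 • βhat μ = 0)
    (D : (ℝ × ℝ) →L[ℝ] (ι → ℝ))
    (hdiff : HasFDerivAt βhat D lam) :
    D (1, 0) = -((XTIᵀ * XTI + lam.2 • (1 : Matrix ι ι ℝ))⁻¹.mulVec
        (fun i => Real.sign (βhat lam i))) ∧
    D (0, 1) = -((XTIᵀ * XTI + lam.2 • (1 : Matrix ι ι ℝ))⁻¹.mulVec (βhat lam)) := by
  classical
  set s : ι → ℝ := fun i => Real.sign (βhat lam i) with hs
  set A : Matrix ι ι ℝ := XTIᵀ * XTI with hA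
  set M : Matrix ι ι ℝ := A + lam.2 • (1 : Matrix ι ι ℝ) with hM
  -- M is invertible
  have hMz : ∀ z : ι → ℝ, M.mulVec z = 0 → z = 0 := by
    intro z hz
    have h0 : z ⬝ᵥ M.mulVec z = 0 := by rw [hz]; simp
    have hdec : z ⬝ᵥ M.mulVec z
        = (XTI.mulVec z) ⬝ᵥ (XTI.mulVec z) + lam.2 * (z ⬝ᵥ z) := by
      rw [hM, add_mulVec, dotProduct_add, smul_mulVec, one_mulVec, hA,
        ← mulVec_mulVec, dotProduct_mulVec, vecMul_transpose, dotProduct_smul]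
      simp [smul_eq_mul]
    have h1 : (0:ℝ) ≤ (XTI.mulVec z) ⬝ᵥ (XTI.mulVec z) :=
      Finset.sum_nonneg fun i _ => mul_self_nonneg _
    have h2 : (0:ℝ) ≤ z ⬝ᵥ z := Finset.sum_nonneg fun i _ => mul_self_nonneg _
    have hzz : z ⬝ᵥ z = 0 := by nlinarith [hdec, h0]
    exact dotProduct_self_eq_zero.mp hzz
  have hMinj : Function.Injective M.mulVec := by
    intro x y hxy
    have := hMz (x - y) (by rw [mulVec_sub, hxy, sub_self])
    exact sub_eq_zero.mp this
  have hMunit : IsUnit M := mulVec_injective_iff_isUnit.mp hMinj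
  have hMdet : IsUnit M.det := (isUnit_iff_isUnit_det M).mp hMunit
  have hsolve : ∀ w b : ι → ℝ, M.mulVec w = b → w = M⁻¹.mulVec b := by
    intro w b hwb
    rw [← hwb, mulVec_mulVec, nonsing_inv_mul M hMdet, one_mulVec]
  -- the stationarity function and its derivative
  set c : ι → ℝ := XTIᵀ.mulVec yT with hc
  set T : (ι → ℝ) →L[ℝ] (ι → ℝ) := LinearMap.toContinuousLinearMap A.mulVecLin with hT
  set L : (ℝ × ℝ) →L[ℝ] (ι → ℝ) :=
    T.comp D + (ContinuousLinearMap.fst ℝ ℝ ℝ).smulRight s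
      + (lam.2 • D + (ContinuousLinearMap.snd ℝ ℝ ℝ).smulRight (βhat lam)) with hL
  have hG : HasFDerivAt
      (fun μ : ℝ × ℝ => (A.mulVec (βhat μ) - c) + μ.1 • s + μ.2 • βhat μ) L lam := by
    have h1 : HasFDerivAt (fun μ : ℝ × ℝ => A.mulVec (βhat μ) - c) (T.comp D) lam := by
      have := (T.hasFDerivAt (x := βhat lam)).comp lam hdiff
      simpa [hT] using this.sub_const c
    have h2 : HasFDerivAt (fun μ : ℝ × ℝ => μ.1 • s)
        ((ContinuousLinearMap.fst ℝ ℝ ℝ).smulRight s) lam := by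
      exact ((ContinuousLinearMap.fst ℝ ℝ ℝ).smulRight s).hasFDerivAt
    have h3 : HasFDerivAt (fun μ : ℝ × ℝ => μ.2 • βhat μ)
        (lam.2 • D + (ContinuousLinearMap.snd ℝ ℝ ℝ).smulRight (βhat lam)) lam :=
      HasFDerivAt.smul (𝕜 := ℝ) (𝕜' := ℝ) (F := ι → ℝ) ((ContinuousLinearMap.snd ℝ ℝ ℝ).hasFDerivAt) hdiff
    exact (h1.add h2).add h3
  have hzero : HasFDerivAt
      (fun μ : ℝ × ℝ => (A.mulVec (βhat μ) - c) + μ.1 • s + μ.2 • βhat μ) (0 : (ℝ × ℝ) →L[ℝ] (ι → ℝ)) lam := by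
    have heq : (fun μ : ℝ × ℝ => (A.mulVec (βhat μ) - c) + μ.1 • s + μ.2 • βhat μ)
        =ᶠ[nhds lam] fun _ => (0 : ι → ℝ) := by
      filter_upwards [hU.mem_nhds hlamU] with μ hμ
      have h := hstat μ hμ
      have hsgn : (fun i => Real.sign (βhat μ i)) = s := by
        funext i; exact hsupp μ hμ i
      calc (A.mulVec (βhat μ) - c) + μ.1 • s + μ.2 • βhat μ
          = XTIᵀ.mulVec (XTI.mulVec (βhat μ) - yT)
            + μ.1 • (fun i => Real.sign (βhat μ i)) + μ.2 • βhat μ := by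
            rw [hsgn, mulVec_sub, hA, ← mulVec_mulVec, hc]
        _ = 0 := h
    exact (hasFDerivAt_const (0 : ι → ℝ) lam).congr_of_eventuallyEq heq
  have hL0 : L = 0 := hG.unique hzero
  have key : ∀ v : ℝ × ℝ, M.mulVec (D v) = -(v.1 • s + v.2 • βhat lam) := by
    intro v
    have h := congrFun (congrArg DFunLike.coe hL0) v
    have h' : A.mulVec (D v) + v.1 • s + (lam.2 • D v + v.2 • βhat lam) = 0 := by
      simpa [hL, hT, ContinuousLinearMap.add_apply, ContinuousLinearMap.comp_apply,
        ContinuousLinearMap.smulRight_apply, ContinuousLinearMap.smul_apply,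
        Matrix.mulVecLin_apply] using h
    have hMv : M.mulVec (D v) = A.mulVec (D v) + lam.2 • D v := by
      rw [hM, add_mulVec, smul_mulVec, one_mulVec]
    rw [hMv]
    funext i
    have hi := congrFun h' i
    simp only [Pi.add_apply, Pi.smul_apply, Pi.neg_apply, Pi.zero_apply, smul_eq_mul] at hi ⊢
    linarith
  constructor
  · have h := key (1, 0)
    have h' : M.mulVec (D (1, 0)) = -s := by simpa using h
    have := hsolve _ _ h'
    rw [this, hM, hA]
    simp [mulVec_neg]
  · have h := key (0, 1)
    have h' : M.mulVec (D (0, 1)) = -(βhat lam) := by simpa using h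
    have := hsolve _ _ h'
    rw [this, hM, hA]
    simp [mulVec_neg]
end

section
/- Fix λ₁ ≥ 0, λ₂ > 0. The elastic net criterion θ ↦ (1/2)‖y − Xθ‖² + λ₁‖θ‖₁ + (λ₂/2)‖θ‖₂² is strongly convex (with parameter λ₂), hence has a unique minimizer θ̂(λ₁, λ₂) for every (λ₁, λ₂), and the map λ ↦ θ̂(λ) is continuous on ℝ₊ × ℝ₊₊. -/
open Matrix

section ElasticNetAux

lemma en_growth {E : Type*} [NormedAddCommGroup E] [InnerProductSpace ℝ E]
    {m : ℝ} {f : E → ℝ} (hf : StrongConvexOn Set.univ m f) {x : E}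
    (hx : IsMinOn f Set.univ x) (θ : E) :
    f x + m / 4 * ‖θ - x‖ ^ 2 ≤ f θ := by
  have h := hf.2 (Set.mem_univ x) (Set.mem_univ θ)
    (show (0:ℝ) ≤ 1/2 by norm_num) (show (0:ℝ) ≤ 1/2 by norm_num)
    (show (1/2 : ℝ) + 1/2 = 1 by norm_num)
  have h2 : f x ≤ f ((1/2 : ℝ) • x + (1/2 : ℝ) • θ) := hx (Set.mem_univ _)
  rw [norm_sub_rev] at h
  simp only [smul_eq_mul] at h
  linarith

lemma en_mulVec_comb {n p : ℕ} (X : Matrix (Fin n) (Fin p) ℝ)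
    (θ1 θ2 : EuclideanSpace ℝ (Fin p)) (a b : ℝ) (k : Fin n) :
    X.mulVec (a • θ1 + b • θ2) k = a * X.mulVec θ1 k + b * X.mulVec θ2 k := by
  simp only [Matrix.mulVec, dotProduct, Pi.add_apply, Pi.smul_apply, PiLp.add_apply, PiLp.smul_apply, smul_eq_mul]
  rw [Finset.mul_sum, Finset.mul_sum, ← Finset.sum_add_distrib]
  exact Finset.sum_congr rfl fun j _ => by ring

lemma en_convexOn {n p : ℕ} (X : Matrix (Fin n) (Fin p) ℝ) (y : Fin n → ℝ) {l1 : ℝ}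
    (hl1 : 0 ≤ l1) :
    ConvexOn ℝ Set.univ (fun θ : EuclideanSpace ℝ (Fin p) =>
      (1/2 : ℝ) * ∑ k, (y k - X.mulVec θ k) ^ 2 + l1 * ∑ i, |θ i|) := by
  refine ⟨convex_univ, fun θ1 _ θ2 _ a b ha hb hab => ?_⟩
  simp only [smul_eq_mul]
  have h1 : ∑ k, (y k - X.mulVec (a • θ1 + b • θ2) k) ^ 2
      ≤ a * ∑ k, (y k - X.mulVec θ1 k) ^ 2 + b * ∑ k, (y k - X.mulVec θ2 k) ^ 2 := by
    rw [Finset.mul_sum, Finset.mul_sum, ← Finset.sum_add_distrib]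
    refine Finset.sum_le_sum fun k _ => ?_
    rw [en_mulVec_comb]
    have hb' : b = 1 - a := by linarith
    subst hb'
    nlinarith [mul_nonneg (mul_nonneg ha hb) (sq_nonneg (X.mulVec θ1 k - X.mulVec θ2 k))]
  have h2 : ∑ i, |(a • θ1 + b • θ2 : EuclideanSpace ℝ (Fin p)) i|
      ≤ a * ∑ i, |θ1 i| + b * ∑ i, |θ2 i| := by
    rw [Finset.mul_sum, Finset.mul_sum, ← Finset.sum_add_distrib]
    refine Finset.sum_le_sum fun i _ => ?_
    simp only [PiLp.add_apply, PiLp.smul_apply, smul_eq_mul]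
    calc |a * θ1 i + b * θ2 i| ≤ |a * θ1 i| + |b * θ2 i| := abs_add_le _ _
      _ = a * |θ1 i| + b * |θ2 i| := by
          rw [abs_mul, abs_mul, abs_of_nonneg ha, abs_of_nonneg hb]
  have h3 := mul_le_mul_of_nonneg_left h2 hl1
  simp only [WithLp.ofLp_add, WithLp.ofLp_smul] at h3 ⊢
  nlinarith [h1, h3]

lemma en_l1_le {p : ℕ} (θ : EuclideanSpace ℝ (Fin p)) :
    ∑ i, |θ i| ≤ p * ‖θ‖ := by
  have hcoord : ∀ i, |θ i| ≤ ‖θ‖ := by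
    intro i
    have h1 : |θ i| ^ 2 ≤ ‖θ‖ ^ 2 := by
      rw [EuclideanSpace.norm_eq, Real.sq_sqrt (Finset.sum_nonneg fun j _ => sq_nonneg _)]
      rw [sq_abs]
      calc θ i ^ 2 ≤ ∑ j, θ j ^ 2 :=
            Finset.single_le_sum (fun j _ => sq_nonneg (θ j)) (Finset.mem_univ i)
        _ = ∑ j, ‖θ j‖ ^ 2 := by simp [Real.norm_eq_abs, sq_abs]
    nlinarith [abs_nonneg (θ i), norm_nonneg θ]
  calc ∑ i, |θ i| ≤ ∑ _i : Fin p, ‖θ‖ := Finset.sum_le_sum fun i _ => hcoord i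
    _ = p * ‖θ‖ := by simp [Finset.sum_const, Finset.card_univ, nsmul_eq_mul]

end ElasticNetAux

set_option maxHeartbeats 1600000 in
/-- For `λ₁ ≥ 0, λ₂ > 0`, the elastic net criterion is `λ₂`-strongly convex,
hence has a unique minimizer `θ̂(λ₁, λ₂)`, and the minimizer map is continuous on
`{λ₁ ≥ 0} × {λ₂ > 0}`. -/
theorem elastic_net_strong_convexity_unique_continuous {n p : ℕ}
    (X : Matrix (Fin n) (Fin p) ℝ) (y : Fin n → ℝ)
    (F : ℝ × ℝ → EuclideanSpace ℝ (Fin p) → ℝ)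
    (hF : ∀ l : ℝ × ℝ, ∀ θ : EuclideanSpace ℝ (Fin p),
      F l θ = (1 / 2) * ∑ k, (y k - X.mulVec θ k) ^ 2
        + l.1 * ∑ i, |θ i| + (l.2 / 2) * ‖θ‖ ^ 2)
    (θhat : ℝ × ℝ → EuclideanSpace ℝ (Fin p))
    (hmin : ∀ l ∈ {l : ℝ × ℝ | 0 ≤ l.1 ∧ 0 < l.2}, IsMinOn (F l) Set.univ (θhat l)) :
    (∀ l ∈ {l : ℝ × ℝ | 0 ≤ l.1 ∧ 0 < l.2}, StrongConvexOn Set.univ l.2 (F l)) ∧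
    (∀ l ∈ {l : ℝ × ℝ | 0 ≤ l.1 ∧ 0 < l.2},
      ∀ θ : EuclideanSpace ℝ (Fin p), IsMinOn (F l) Set.univ θ → θ = θhat l) ∧
    ContinuousOn θhat {l : ℝ × ℝ | 0 ≤ l.1 ∧ 0 < l.2} := by
  have hsc : ∀ l ∈ {l : ℝ × ℝ | 0 ≤ l.1 ∧ 0 < l.2}, StrongConvexOn Set.univ l.2 (F l) := by
    intro l hl
    rw [strongConvexOn_iff_convex]
    have heq : (fun θ : EuclideanSpace ℝ (Fin p) => F l θ - l.2 / 2 * ‖θ‖ ^ 2)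
        = fun θ : EuclideanSpace ℝ (Fin p) => (1/2 : ℝ) * ∑ k, (y k - X.mulVec θ k) ^ 2 + l.1 * ∑ i, |θ i| := by
      funext θ
      rw [hF]
      ring
    rw [heq]
    exact en_convexOn X y hl.1
  have huniq : ∀ l ∈ {l : ℝ × ℝ | 0 ≤ l.1 ∧ 0 < l.2},
      ∀ θ : EuclideanSpace ℝ (Fin p), IsMinOn (F l) Set.univ θ → θ = θhat l := by
    intro l hl θ hθ
    exact ((hsc l hl).strictConvexOn hl.2).eq_of_isMinOn hθ (hmin l hl)
      (Set.mem_univ _) (Set.mem_univ _)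
  refine ⟨hsc, huniq, ?_⟩
  -- Continuity
  obtain ⟨B, hBdef⟩ : ∃ b : ℝ, b = ∑ k, y k ^ 2 := ⟨_, rfl⟩
  have hB : 0 ≤ B := by rw [hBdef]; exact Finset.sum_nonneg fun k _ => sq_nonneg _
  have hSnn : ∀ θ : EuclideanSpace ℝ (Fin p), 0 ≤ ∑ i, |θ i| :=
    fun θ => Finset.sum_nonneg fun i _ => abs_nonneg _
  have hQnn : ∀ θ : EuclideanSpace ℝ (Fin p), 0 ≤ ∑ k, (y k - X.mulVec θ k) ^ 2 :=
    fun θ => Finset.sum_nonneg fun k _ => sq_nonneg _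
  have hF0 : ∀ l : ℝ × ℝ, F l 0 = 1/2 * B := by
    intro l
    rw [hF, hBdef]
    have h0 : ∀ k, X.mulVec (0 : EuclideanSpace ℝ (Fin p)) k = 0 := by
      intro k
      simp [Matrix.mulVec, dotProduct]
    simp [h0]
  have hnormsq : ∀ l ∈ {l : ℝ × ℝ | 0 ≤ l.1 ∧ 0 < l.2}, ‖θhat l‖ ^ 2 ≤ B / l.2 := by
    intro l hl
    have h1 : F l (θhat l) ≤ F l 0 := hmin l hl (Set.mem_univ _)
    rw [hF0] at h1
    rw [hF] at h1
    have h2 : 0 ≤ l.1 * ∑ i, |θhat l i| := mul_nonneg hl.1 (hSnn _)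
    have h3 := hQnn (θhat l)
    rw [le_div_iff₀ hl.2]
    linarith [h1, h2, h3]
  rw [Metric.continuousOn_iff]
  intro l₀ hl₀ ε hε
  obtain ⟨hl₀1, hl₀2⟩ := hl₀
  obtain ⟨R, hRdef⟩ : ∃ r : ℝ, r = 2 * B / l₀.2 + 1 := ⟨_, rfl⟩
  have hBl : 0 ≤ 2 * B / l₀.2 := div_nonneg (by linarith) hl₀2.le
  have hR1 : 1 ≤ R := by rw [hRdef]; linarith
  have hR0 : 0 < R := by linarith
  obtain ⟨M, hMdef⟩ : ∃ m : ℝ, m = p * R + R / 2 := ⟨_, rfl⟩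
  have hpR : (0:ℝ) ≤ p * R := mul_nonneg (Nat.cast_nonneg p) hR0.le
  have hM : 0 < M := by rw [hMdef]; linarith
  obtain ⟨C, hCdef⟩ : ∃ c : ℝ, c = 16 * M / l₀.2 + 1 := ⟨_, rfl⟩
  have hC0 : 0 < C := by
    have : 0 ≤ 16 * M / l₀.2 := div_nonneg (by linarith) hl₀2.le
    rw [hCdef]; linarith
  obtain ⟨e, hedef⟩ : ∃ x : ℝ, x = ε ^ 2 / C := ⟨_, rfl⟩
  have he : 0 < e := by rw [hedef]; exact div_pos (by positivity) hC0
  refine ⟨min (l₀.2 / 2) e, lt_min (by linarith) he, fun l hl hd => ?_⟩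
  obtain ⟨hl1, hl2⟩ := hl
  rw [Prod.dist_eq, max_lt_iff] at hd
  obtain ⟨hd1, hd2⟩ := hd
  rw [Real.dist_eq] at hd1 hd2
  have hd1e : |l.1 - l₀.1| < e := lt_of_lt_of_le hd1 (min_le_right _ _)
  have hd2e : |l.2 - l₀.2| < e := lt_of_lt_of_le hd2 (min_le_right _ _)
  have hd2h : |l.2 - l₀.2| < l₀.2 / 2 := lt_of_lt_of_le hd2 (min_le_left _ _)
  have hl2' : l₀.2 / 2 < l.2 := by
    have h := abs_lt.1 hd2h
    linarith [h.1]
  -- abbreviations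
  obtain ⟨S0, hS0def⟩ : ∃ s : ℝ, s = ∑ i, |θhat l₀ i| := ⟨_, rfl⟩
  obtain ⟨S1, hS1def⟩ : ∃ s : ℝ, s = ∑ i, |θhat l i| := ⟨_, rfl⟩
  obtain ⟨N0, hN0def⟩ : ∃ s : ℝ, s = ‖θhat l₀‖ ^ 2 := ⟨_, rfl⟩
  obtain ⟨N1, hN1def⟩ : ∃ s : ℝ, s = ‖θhat l‖ ^ 2 := ⟨_, rfl⟩
  have hS0nn : 0 ≤ S0 := by rw [hS0def]; exact hSnn _
  have hS1nn : 0 ≤ S1 := by rw [hS1def]; exact hSnn _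
  have hN0nn : 0 ≤ N0 := by rw [hN0def]; positivity
  have hN1nn : 0 ≤ N1 := by rw [hN1def]; positivity
  -- norm bounds
  have hn0 : N0 ≤ R := by
    have h := hnormsq l₀ ⟨hl₀1, hl₀2⟩
    have h2 : B / l₀.2 ≤ 2 * B / l₀.2 := by
      rw [div_le_div_iff₀ hl₀2 hl₀2]
      nlinarith [mul_nonneg hB hl₀2.le]
    rw [hN0def, hRdef]; linarith
  have hn1 : N1 ≤ R := by
    have h := hnormsq l ⟨hl1, hl2⟩
    have h2 : B / l.2 ≤ 2 * B / l₀.2 := by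
      rw [div_le_div_iff₀ hl2 hl₀2]
      nlinarith [mul_nonneg hB (by linarith : (0:ℝ) ≤ 2 * l.2 - l₀.2)]
    rw [hN1def, hRdef]; linarith
  have hnorm0 : ‖θhat l₀‖ ≤ R := by
    have h' : ‖θhat l₀‖ ^ 2 ≤ R := by rw [← hN0def]; exact hn0
    linarith [sq_nonneg (‖θhat l₀‖ - 1)]
  have hnorm1 : ‖θhat l‖ ≤ R := by
    have h' : ‖θhat l‖ ^ 2 ≤ R := by rw [← hN1def]; exact hn1
    linarith [sq_nonneg (‖θhat l‖ - 1)]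
  have hS0b : S0 ≤ p * R := by
    rw [hS0def]
    exact le_trans (en_l1_le _) (mul_le_mul_of_nonneg_left hnorm0 (Nat.cast_nonneg p))
  have hS1b : S1 ≤ p * R := by
    rw [hS1def]
    exact le_trans (en_l1_le _) (mul_le_mul_of_nonneg_left hnorm1 (Nat.cast_nonneg p))
  -- growth inequality at l
  have key := en_growth (hsc l ⟨hl1, hl2⟩) (hmin l ⟨hl1, hl2⟩) (θhat l₀)
  have hmin0 : F l₀ (θhat l₀) ≤ F l₀ (θhat l) := hmin l₀ ⟨hl₀1, hl₀2⟩ (Set.mem_univ _)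
  obtain ⟨q, hqdef⟩ : ∃ x : ℝ, x = ‖θhat l₀ - θhat l‖ ^ 2 := ⟨_, rfl⟩
  have hq0 : 0 ≤ q := by rw [hqdef]; positivity
  rw [← hqdef] at key
  -- difference formulas
  have hdiff0 : F l (θhat l₀) = F l₀ (θhat l₀) + (l.1 - l₀.1) * S0 + (l.2 - l₀.2) / 2 * N0 := by
    rw [hS0def, hN0def, hF, hF]; ring
  have hdiff1 : F l (θhat l) = F l₀ (θhat l) + (l.1 - l₀.1) * S1 + (l.2 - l₀.2) / 2 * N1 := by
    rw [hS1def, hN1def, hF, hF]; ring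
  -- bound the cross terms
  have hSd : |S0 - S1| ≤ p * R := abs_le.2 ⟨by linarith, by linarith⟩
  have hNd : |N0 - N1| ≤ R := abs_le.2 ⟨by linarith, by linarith⟩
  have ht1 : (l.1 - l₀.1) * (S0 - S1) ≤ e * (p * R) := by
    calc (l.1 - l₀.1) * (S0 - S1) ≤ |(l.1 - l₀.1) * (S0 - S1)| := le_abs_self _
      _ = |l.1 - l₀.1| * |S0 - S1| := abs_mul _ _
      _ ≤ e * (p * R) := mul_le_mul hd1e.le hSd (abs_nonneg _) he.le
  have ht2 : (l.2 - l₀.2) / 2 * (N0 - N1) ≤ e / 2 * R := by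
    calc (l.2 - l₀.2) / 2 * (N0 - N1) ≤ |(l.2 - l₀.2) / 2 * (N0 - N1)| := le_abs_self _
      _ = |l.2 - l₀.2| / 2 * |N0 - N1| := by rw [abs_mul, abs_div]; norm_num
      _ ≤ e / 2 * R := mul_le_mul (by linarith) hNd (abs_nonneg _) (by linarith)
  -- main inequality chain
  have hmain : l.2 / 4 * q ≤ e * M := by
    have hch : l.2 / 4 * q ≤ F l (θhat l₀) - F l (θhat l) := by linarith [key]
    rw [hdiff0, hdiff1] at hch
    rw [hMdef]
    linarith [hch, hmin0, ht1, ht2]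
  -- conclude
  have hql : l₀.2 * q ≤ 8 * (e * M) := by
    have hmul : l₀.2 / 2 * q ≤ l.2 * q := mul_le_mul_of_nonneg_right hl2'.le hq0
    linarith [hmain, hmul]
  have heC : e * C = ε ^ 2 := by
    rw [hedef]
    field_simp
  have hC2 : e * (16 * M + l₀.2) = ε ^ 2 * l₀.2 := by
    have hCl : C * l₀.2 = 16 * M + l₀.2 := by
      rw [hCdef]
      field_simp
    calc e * (16 * M + l₀.2) = e * (C * l₀.2) := by rw [hCl]
      _ = (e * C) * l₀.2 := by ring
      _ = ε ^ 2 * l₀.2 := by rw [heC]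
  have hqe : q < ε ^ 2 := by
    have h5 : l₀.2 * q < l₀.2 * ε ^ 2 := by
      linarith [hql, hC2, mul_pos he hl₀2, mul_pos he hM]
    exact lt_of_mul_lt_mul_left h5 hl₀2.le
  have hde : dist (θhat l) (θhat l₀) = ‖θhat l₀ - θhat l‖ := by
    rw [dist_eq_norm, norm_sub_rev]
  rw [hde]
  have hq' : ‖θhat l₀ - θhat l‖ ^ 2 < ε ^ 2 := by rw [← hqdef]; exact hqe
  exact lt_of_pow_lt_pow_left₀ 2 hε.le hq'
end

section
/- Consider the additive-model training criterion with group lasso, fused-type lasso on second differences, and a ridge term: L_T(θ, λ) = (1/2)‖y_T − I_T ∑ᵢ θ^{(i)}‖² + λ₀∑ᵢ‖θ^{(i)}‖₂ + ∑ᵢ λᵢ‖D^{(2)} θ^{(i)}‖₁ + (ε/2)∑ᵢ‖θ^{(i)}‖₂². Its differentiable space at θ̂ is the direct sum over i of: {0} if θ̂^{(i)} = 0, and the null space of the rows of D^{(2)} indexed by the zero entries of D^{(2)} θ̂^{(i)} otherwise. -/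
open Filter Matrix

section Aux

/-- A function of the form `g t + c * |t|` with `g` differentiable at `0` and `c ≥ 0`
has a two-sided directional derivative at `0` iff `c = 0`. -/
lemma key_lemma (f g : ℝ → ℝ) (c : ℝ) (hg : DifferentiableAt ℝ g 0) (hc : 0 ≤ c)
    (hf : ∀ t, f t = g t + c * |t|) :
    (∃ d, Tendsto (fun t : ℝ => (f t - f 0) / t) (nhdsWithin 0 {0}ᶜ) (nhds d)) ↔ c = 0 := by
  have hslope : Tendsto (fun t : ℝ => (g t - g 0) / t) (nhdsWithin 0 {0}ᶜ) (nhds (deriv g 0)) := by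
    have := hasDerivAt_iff_tendsto_slope.mp hg.hasDerivAt
    refine this.congr fun t => ?_
    simp [slope_def_field]
  constructor
  · rintro ⟨d, hd⟩
    have hdiff : Tendsto (fun t : ℝ => c * |t| / t) (nhdsWithin 0 {0}ᶜ) (nhds (d - deriv g 0)) := by
      have h2 := hd.sub hslope
      refine h2.congr fun t => ?_
      rw [hf t, hf 0]
      simp only [abs_zero, mul_zero, add_zero]
      rw [add_sub_right_comm, add_div]
      ring
    have hpos : Tendsto (fun t : ℝ => c * |t| / t) (nhdsWithin 0 (Set.Ioi 0)) (nhds c) := by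
      refine Tendsto.congr' ?_ tendsto_const_nhds
      filter_upwards [self_mem_nhdsWithin] with t (ht : (0:ℝ) < t)
      rw [abs_of_pos ht, mul_div_assoc, div_self (ne_of_gt ht), mul_one]
    have hneg : Tendsto (fun t : ℝ => c * |t| / t) (nhdsWithin 0 (Set.Iio 0)) (nhds (-c)) := by
      refine Tendsto.congr' ?_ tendsto_const_nhds
      filter_upwards [self_mem_nhdsWithin] with t (ht : t < (0:ℝ))
      rw [abs_of_neg ht, mul_neg, neg_div, mul_div_assoc, div_self (ne_of_lt ht), mul_one]
    have h1 : (nhdsWithin (0:ℝ) (Set.Ioi 0)) ≤ nhdsWithin 0 {0}ᶜ :=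
      nhdsWithin_mono 0 (fun x hx => ne_of_gt hx)
    have h2 : (nhdsWithin (0:ℝ) (Set.Iio 0)) ≤ nhdsWithin 0 {0}ᶜ :=
      nhdsWithin_mono 0 (fun x hx => ne_of_lt hx)
    have e1 : c = d - deriv g 0 := tendsto_nhds_unique hpos (hdiff.mono_left h1)
    have e2 : -c = d - deriv g 0 := tendsto_nhds_unique hneg (hdiff.mono_left h2)
    linarith
  · intro h0
    refine ⟨deriv g 0, hslope.congr fun t => ?_⟩
    rw [hf t, hf 0, h0]
    simp

lemma abs_piece (a b : ℝ) :
    ∃ g : ℝ → ℝ, ∃ c : ℝ, DifferentiableAt ℝ g 0 ∧ 0 ≤ c ∧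
      (c = 0 ↔ (a = 0 → b = 0)) ∧ ∀ t, |a + t * b| = g t + c * |t| := by
  by_cases h : a = 0
  · subst h
    refine ⟨fun _ => 0, |b|, differentiableAt_const 0, abs_nonneg b, by simp, fun t => by
      simp [abs_mul, mul_comm]⟩
  · refine ⟨fun t => |a + t * b|, 0, ?_, le_refl 0, by simp [h], fun t => by simp⟩
    have hin : DifferentiableAt ℝ (fun t : ℝ => a + t * b) 0 := by fun_prop
    have hne : (fun t : ℝ => a + t * b) 0 ≠ 0 := by simpa using h
    exact (differentiableAt_abs hne).comp 0 hin

lemma sqrt_piece {n : ℕ} (a b : Fin n → ℝ) :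
    ∃ g : ℝ → ℝ, ∃ c : ℝ, DifferentiableAt ℝ g 0 ∧ 0 ≤ c ∧
      (c = 0 ↔ (a = 0 → b = 0)) ∧
      ∀ t, Real.sqrt (∑ j, (a j + t * b j) ^ 2) = g t + c * |t| := by
  by_cases h : a = 0
  · subst h
    refine ⟨fun _ => 0, Real.sqrt (∑ j, (b j) ^ 2), differentiableAt_const 0,
      Real.sqrt_nonneg _, ?_, fun t => ?_⟩
    · rw [Real.sqrt_eq_zero (by positivity)]
      constructor
      · intro hs _
        funext j
        have := (Finset.sum_eq_zero_iff_of_nonneg (fun j _ => sq_nonneg (b j))).mp hs j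
          (Finset.mem_univ j)
        exact pow_eq_zero_iff (by norm_num) |>.mp this
      · intro hb
        rw [hb rfl]
        simp
    · have hsum : ∑ j, ((0:Fin n → ℝ) j + t * b j) ^ 2 = t ^ 2 * ∑ j, (b j) ^ 2 := by
        rw [Finset.mul_sum]
        refine Finset.sum_congr rfl fun j _ => by simp; ring
      rw [hsum, Real.sqrt_mul (sq_nonneg t), Real.sqrt_sq_eq_abs]
      ring
  · refine ⟨fun t => Real.sqrt (∑ j, (a j + t * b j) ^ 2), 0, ?_, le_refl 0, by simp [h],
      fun t => by simp⟩
    have hpos : (0:ℝ) < ∑ j, (a j) ^ 2 := by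
      obtain ⟨j, hj⟩ : ∃ j, a j ≠ 0 := by
        by_contra h'
        push_neg at h'
        exact h (funext h')
      exact Finset.sum_pos' (fun j _ => sq_nonneg _) ⟨j, Finset.mem_univ j, by positivity⟩
    have hin : DifferentiableAt ℝ (fun t : ℝ => ∑ j, (a j + t * b j) ^ 2) 0 := by fun_prop
    have hne : (fun t : ℝ => ∑ j, (a j + t * b j) ^ 2) 0 ≠ 0 := by
      simpa using ne_of_gt hpos
    exact hin.sqrt hne

lemma mulVec_add_smul {m n : ℕ} (M : Matrix (Fin m) (Fin n) ℝ) (x y : Fin n → ℝ) (t : ℝ)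
    (j : Fin m) : M.mulVec (x + t • y) j = M.mulVec x j + t * M.mulVec y j := by
  simp [mulVec, dotProduct, mul_add, Finset.sum_add_distrib, Finset.mul_sum, mul_left_comm]

end Aux

/-- The differentiable space of the additive-model training criterion
`(1/2)‖y_T − I_T ∑ᵢ θ⁽ⁱ⁾‖² + λ₀∑ᵢ‖θ⁽ⁱ⁾‖₂ + ∑ᵢ λᵢ‖D⁽²⁾θ⁽ⁱ⁾‖₁ + (ε/2)∑ᵢ‖θ⁽ⁱ⁾‖₂²`
at `θ̂` is the direct sum over `i` of: `{0}` if `θ̂⁽ⁱ⁾ = 0`, and the null space of the rows of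
`D⁽²⁾` indexed by the zero entries of `D⁽²⁾θ̂⁽ⁱ⁾` otherwise. -/
theorem additive_model_differentiable_space {n nT p : ℕ}
    (IT : Matrix (Fin nT) (Fin n) ℝ) (yT : Fin nT → ℝ)
    (D2 : Matrix (Fin (n - 2)) (Fin n) ℝ)
    (hD2 : ∀ (j : Fin (n - 2)) (i : Fin n),
      D2 j i = if (i : ℕ) = (j : ℕ) then 1
        else if (i : ℕ) = (j : ℕ) + 1 then -2
        else if (i : ℕ) = (j : ℕ) + 2 then 1 else 0)
    (lam₀ : ℝ) (hlam₀ : 0 < lam₀)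
    (lam : Fin p → ℝ) (hlam : ∀ i, 0 < lam i)
    (ε : ℝ) (hε : 0 < ε)
    (LT : (Fin p → Fin n → ℝ) → ℝ)
    (hLT : ∀ θ : Fin p → Fin n → ℝ,
      LT θ = (1 / 2) * ∑ k, (yT k - IT.mulVec (∑ i, θ i) k) ^ 2
        + lam₀ * ∑ i, Real.sqrt (∑ j, (θ i j) ^ 2)
        + ∑ i, lam i * ∑ j, |D2.mulVec (θ i) j|
        + (ε / 2) * ∑ i, ∑ j, (θ i j) ^ 2)
    (θhat : Fin p → Fin n → ℝ) :
    {u : Fin p → Fin n → ℝ | ∃ d : ℝ,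
        Tendsto (fun t : ℝ => (LT (θhat + t • u) - LT θhat) / t)
          (nhdsWithin 0 {0}ᶜ) (nhds d)}
      = {u : Fin p → Fin n → ℝ | ∀ i,
          (θhat i = 0 → u i = 0) ∧
          (θhat i ≠ 0 → ∀ j, D2.mulVec (θhat i) j = 0 → D2.mulVec (u i) j = 0)} := by
  ext u
  simp only [Set.mem_setOf_eq]
  -- per-group sqrt pieces
  have hsq : ∀ i : Fin p, ∃ g : ℝ → ℝ, ∃ c : ℝ, DifferentiableAt ℝ g 0 ∧ 0 ≤ c ∧
      (c = 0 ↔ (θhat i = 0 → u i = 0)) ∧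
      ∀ t, Real.sqrt (∑ j, (θhat i j + t * u i j) ^ 2) = g t + c * |t| :=
    fun i => sqrt_piece (θhat i) (u i)
  choose G cG hGdiff hGnn hGiff hGeq using hsq
  -- per-(i,j) abs pieces
  have hab : ∀ (i : Fin p) (j : Fin (n - 2)), ∃ g : ℝ → ℝ, ∃ c : ℝ,
      DifferentiableAt ℝ g 0 ∧ 0 ≤ c ∧
      (c = 0 ↔ (D2.mulVec (θhat i) j = 0 → D2.mulVec (u i) j = 0)) ∧
      ∀ t, |D2.mulVec (θhat i) j + t * D2.mulVec (u i) j| = g t + c * |t| :=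
    fun i j => abs_piece (D2.mulVec (θhat i) j) (D2.mulVec (u i) j)
  choose H cH hHdiff hHnn hHiff hHeq using hab
  set A : Fin nT → ℝ := IT.mulVec (∑ i, θhat i) with hA
  set B : Fin nT → ℝ := IT.mulVec (∑ i, u i) with hB
  set g : ℝ → ℝ := fun t =>
      (1 / 2) * ∑ k, (yT k - (A k + t * B k)) ^ 2
      + lam₀ * ∑ i, G i t
      + ∑ i, lam i * ∑ j, H i j t
      + (ε / 2) * ∑ i, ∑ j, (θhat i j + t * u i j) ^ 2 with hgdef
  set c : ℝ := lam₀ * ∑ i, cG i + ∑ i, lam i * ∑ j, cH i j with hcdef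
  have hgdiff : DifferentiableAt ℝ g 0 := by
    apply DifferentiableAt.add
    apply DifferentiableAt.add
    apply DifferentiableAt.add
    · fun_prop
    · exact (DifferentiableAt.fun_sum (fun i _ => hGdiff i)).const_mul lam₀
    · exact DifferentiableAt.fun_sum fun i _ =>
        (DifferentiableAt.fun_sum fun j _ => hHdiff i j).const_mul (lam i)
    · fun_prop
  have hcnn : 0 ≤ c := by
    apply add_nonneg
    · exact mul_nonneg hlam₀.le (Finset.sum_nonneg fun i _ => hGnn i)
    · exact Finset.sum_nonneg fun i _ =>
        mul_nonneg (hlam i).le (Finset.sum_nonneg fun j _ => hHnn i j)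
  have hfeq : ∀ t, LT (θhat + t • u) = g t + c * |t| := by
    intro t
    rw [hLT]
    have e1 : ∀ k, IT.mulVec (∑ i, (θhat + t • u) i) k = A k + t * B k := by
      intro k
      have : ∑ i, (θhat + t • u) i = (∑ i, θhat i) + t • (∑ i, u i) := by
        rw [Finset.smul_sum, ← Finset.sum_add_distrib]
        rfl
      rw [this, mulVec_add_smul]
    have e2 : ∀ i t', (θhat + t • u) i t' = θhat i t' + t * u i t' := fun i t' => rfl
    have e3 : ∀ i j, D2.mulVec ((θhat + t • u) i) j
        = D2.mulVec (θhat i) j + t * D2.mulVec (u i) j := by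
      intro i j
      have : (θhat + t • u) i = θhat i + t • u i := rfl
      rw [this, mulVec_add_smul]
    simp only [e1, e2, e3, hGeq, hHeq]
    have s1 : ∑ i, (G i t + cG i * |t|) = (∑ i, G i t) + (∑ i, cG i) * |t| := by
      rw [Finset.sum_add_distrib, Finset.sum_mul]
    have s2 : ∑ i, lam i * ∑ j, (H i j t + cH i j * |t|)
        = (∑ i, lam i * ∑ j, H i j t) + (∑ i, lam i * ∑ j, cH i j) * |t| := by
      calc ∑ i, lam i * ∑ j, (H i j t + cH i j * |t|)
          = ∑ i, (lam i * ∑ j, H i j t + (lam i * ∑ j, cH i j) * |t|) := by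
            refine Finset.sum_congr rfl fun i _ => ?_
            rw [Finset.sum_add_distrib, mul_add, ← Finset.sum_mul, mul_assoc]
        _ = _ := by rw [Finset.sum_add_distrib, ← Finset.sum_mul]
    rw [s1, s2]
    simp only [hgdef, hcdef]
    ring
  have hmain := key_lemma (fun t => LT (θhat + t • u)) g c hgdiff hcnn hfeq
  have heqfun : (fun t : ℝ => (LT (θhat + t • u) - LT θhat) / t)
      = fun t : ℝ => ((fun s : ℝ => LT (θhat + s • u)) t - (fun s : ℝ => LT (θhat + s • u)) 0) / t := by
    funext t
    simp
  rw [heqfun, hmain, hcdef]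
  have h1 : lam₀ * ∑ i, cG i + ∑ i, lam i * ∑ j, cH i j = 0
      ↔ (∀ i, cG i = 0) ∧ ∀ i j, cH i j = 0 := by
    rw [add_eq_zero_iff_of_nonneg
        (mul_nonneg hlam₀.le (Finset.sum_nonneg fun i _ => hGnn i))
        (Finset.sum_nonneg fun i _ =>
          mul_nonneg (hlam i).le (Finset.sum_nonneg fun j _ => hHnn i j))]
    constructor
    · rintro ⟨ha, hb⟩
      rcases mul_eq_zero.mp ha with h | h
      · exact absurd h (ne_of_gt hlam₀)
      · have hG0 := (Finset.sum_eq_zero_iff_of_nonneg (fun i _ => hGnn i)).mp h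
        have hH0 := (Finset.sum_eq_zero_iff_of_nonneg (fun i _ =>
          mul_nonneg (hlam i).le (Finset.sum_nonneg fun j _ => hHnn i j))).mp hb
        refine ⟨fun i => hG0 i (Finset.mem_univ i), fun i j => ?_⟩
        have := hH0 i (Finset.mem_univ i)
        rcases mul_eq_zero.mp this with h' | h'
        · exact absurd h' (ne_of_gt (hlam i))
        · exact (Finset.sum_eq_zero_iff_of_nonneg (fun j _ => hHnn i j)).mp h' j
            (Finset.mem_univ j)
    · rintro ⟨ha, hb⟩
      constructor
      · rw [Finset.sum_eq_zero fun i _ => ha i, mul_zero]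
      · exact Finset.sum_eq_zero fun i _ => by
          rw [Finset.sum_eq_zero fun j _ => hb i j, mul_zero]
  rw [h1]
  constructor
  · rintro ⟨ha, hb⟩ i
    exact ⟨(hGiff i).mp (ha i), fun _ j hj => (hHiff i j).mp (hb i j) hj⟩
  · intro h
    constructor
    · intro i
      exact (hGiff i).mpr (h i).1
    · intro i j
      refine (hHiff i j).mpr fun hj => ?_
      by_cases hz : θhat i = 0
      · rw [(h i).1 hz]
        simp
      · exact (h i).2 hz j hj
end

section
/- Let f : ℝ^p → ℝ be the group-lasso-plus-lasso penalty f(θ) = λ₀‖θ‖₁ + ∑_m λ_m ‖θ^{(m)}‖₂ with all λ₀, λ_m > 0. Then the differentiable space of f at θ̂ equals span{eⱼ : θ̂ⱼ ≠ 0}: the two-sided directional derivative of f at θ̂ along u exists if and only if uⱼ = 0 for every j with θ̂ⱼ = 0. -/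
open Filter

/-- For the group-lasso-plus-lasso penalty
`f(θ) = λ₀‖θ‖₁ + ∑ₘ λₘ‖θ⁽ᵐ⁾‖₂` with all `λ₀, λₘ > 0`, the differentiable space at `θ̂` is
`span{eⱼ : θ̂ⱼ ≠ 0}`: the two-sided directional derivative of `f` at `θ̂` along `u` exists if
and only if `uⱼ = 0` for every `j` with `θ̂ⱼ = 0`. -/
theorem sparse_group_lasso_differentiable_space {p M : ℕ}
    (g : Fin p → Fin M)  -- group assignment
    (lam₀ : ℝ) (hlam₀ : 0 < lam₀)
    (lam : Fin M → ℝ) (hlam : ∀ m, 0 < lam m)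
    (f : (Fin p → ℝ) → ℝ)
    (hf : ∀ θ : Fin p → ℝ,
      f θ = lam₀ * ∑ j, |θ j|
        + ∑ m, lam m * Real.sqrt (∑ j, if g j = m then (θ j) ^ 2 else 0))
    (θhat : Fin p → ℝ) :
    ∀ u : Fin p → ℝ,
      (∃ d : ℝ, Tendsto (fun t : ℝ => (f (θhat + t • u) - f θhat) / t)
          (nhdsWithin 0 {0}ᶜ) (nhds d))
        ↔ ∀ j, θhat j = 0 → u j = 0 := by
  intro u
  classical
  -- the "smooth part"
  set G : ℝ → ℝ := fun t =>
    lam₀ * ∑ j ∈ Finset.univ.filter (fun j => ¬ θhat j = 0), |θhat j + t * u j|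
      + ∑ m ∈ Finset.univ.filter
          (fun m => ¬ (∑ j, if g j = m then (θhat j) ^ 2 else 0) = 0),
          lam m * Real.sqrt (∑ j, if g j = m then (θhat j + t * u j) ^ 2 else 0) with hG
  -- the "kink coefficient"
  set K : ℝ :=
    lam₀ * ∑ j ∈ Finset.univ.filter (fun j => θhat j = 0), |u j|
      + ∑ m ∈ Finset.univ.filter
          (fun m => (∑ j, if g j = m then (θhat j) ^ 2 else 0) = 0),
          lam m * Real.sqrt (∑ j, if g j = m then (u j) ^ 2 else 0) with hK
  -- zero groups consist of zero coordinates
  have hzgrp : ∀ m, (∑ j, if g j = m then (θhat j) ^ 2 else 0) = 0 →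
      ∀ j, g j = m → θhat j = 0 := by
    intro m hm j hj
    have h := (Finset.sum_eq_zero_iff_of_nonneg
      (fun j _ => by positivity)).mp hm j (Finset.mem_univ j)
    rw [hj] at h
    simpa using h
  -- key decomposition
  have hFG : ∀ t : ℝ, f (θhat + t • u) = G t + |t| * K := by
    intro t
    have hθ : ∀ j, (θhat + t • u) j = θhat j + t * u j := fun j => rfl
    rw [hf]
    simp only [hθ]
    rw [← Finset.sum_filter_add_sum_filter_not Finset.univ (fun j => θhat j = 0)
      (fun j => |θhat j + t * u j|),
      ← Finset.sum_filter_add_sum_filter_not Finset.univ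
      (fun m => (∑ j, if g j = m then (θhat j) ^ 2 else 0) = 0)
      (fun m => lam m * Real.sqrt (∑ j, if g j = m then (θhat j + t * u j) ^ 2 else 0))]
    have h1 : ∑ j ∈ Finset.univ.filter (fun j => θhat j = 0), |θhat j + t * u j|
        = |t| * ∑ j ∈ Finset.univ.filter (fun j => θhat j = 0), |u j| := by
      rw [Finset.mul_sum]
      refine Finset.sum_congr rfl fun j hj => ?_
      have hj0 : θhat j = 0 := (Finset.mem_filter.mp hj).2
      rw [hj0, zero_add, abs_mul]
    have h2 : ∑ m ∈ Finset.univ.filter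
          (fun m => (∑ j, if g j = m then (θhat j) ^ 2 else 0) = 0),
          lam m * Real.sqrt (∑ j, if g j = m then (θhat j + t * u j) ^ 2 else 0)
        = |t| * ∑ m ∈ Finset.univ.filter
          (fun m => (∑ j, if g j = m then (θhat j) ^ 2 else 0) = 0),
          lam m * Real.sqrt (∑ j, if g j = m then (u j) ^ 2 else 0) := by
      rw [Finset.mul_sum]
      refine Finset.sum_congr rfl fun m hm => ?_
      have hm0 := (Finset.mem_filter.mp hm).2
      have hsum : (∑ j, if g j = m then (θhat j + t * u j) ^ 2 else 0)
          = t ^ 2 * ∑ j, if g j = m then (u j) ^ 2 else 0 := by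
        rw [Finset.mul_sum]
        refine Finset.sum_congr rfl fun j _ => ?_
        by_cases h : g j = m
        · rw [hzgrp m hm0 j h]; simp [h]; ring
        · simp [h]
      rw [hsum, Real.sqrt_mul (sq_nonneg t), Real.sqrt_sq_eq_abs]
      ring
    rw [h1, h2, hG, hK]
    ring
  have hF0 : f θhat = G 0 := by
    have := hFG 0
    simpa using this
  -- G is differentiable at 0
  have hGdiff : DifferentiableAt ℝ G 0 := by
    rw [hG]
    apply DifferentiableAt.add
    · apply DifferentiableAt.const_mul
      apply DifferentiableAt.fun_sum
      intro j hj
      have hj0 : ¬ θhat j = 0 := (Finset.mem_filter.mp hj).2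
      have hin : DifferentiableAt ℝ (fun t : ℝ => θhat j + t * u j) 0 := by fun_prop
      exact hin.abs (by simpa using hj0)
    · apply DifferentiableAt.fun_sum
      intro m hm
      have hm0 := (Finset.mem_filter.mp hm).2
      apply DifferentiableAt.const_mul
      have hin : DifferentiableAt ℝ
          (fun t : ℝ => ∑ j, if g j = m then (θhat j + t * u j) ^ 2 else 0) 0 := by
        apply DifferentiableAt.fun_sum
        intro j _
        by_cases h : g j = m <;> simp only [h, if_true, if_false] <;> fun_prop
      refine hin.sqrt ?_
      simpa using hm0
  set L : ℝ := deriv G 0 with hL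
  have hslope : Tendsto (fun t : ℝ => (G t - G 0) / t) (nhdsWithin 0 {0}ᶜ) (nhds L) := by
    have := hasDerivAt_iff_tendsto_slope.mp hGdiff.hasDerivAt
    refine this.congr fun t => ?_
    simp [slope_def_field, div_eq_mul_inv]
  -- the difference quotient
  have hQ : ∀ t : ℝ, (f (θhat + t • u) - f θhat) / t = (G t - G 0) / t + (|t| / t) * K := by
    intro t
    rw [hFG, hF0]
    ring
  -- right limit is L + K
  have hIoi : Set.Ioi (0:ℝ) ⊆ {(0:ℝ)}ᶜ := fun x hx => by
    simp only [Set.mem_compl_iff, Set.mem_singleton_iff]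
    exact ne_of_gt hx
  have hIio : Set.Iio (0:ℝ) ⊆ {(0:ℝ)}ᶜ := fun x hx => by
    simp only [Set.mem_compl_iff, Set.mem_singleton_iff]
    exact ne_of_lt hx
  have hright : Tendsto (fun t : ℝ => (f (θhat + t • u) - f θhat) / t)
      (nhdsWithin 0 (Set.Ioi 0)) (nhds (L + K)) := by
    have h1 : Tendsto (fun t : ℝ => (G t - G 0) / t + K)
        (nhdsWithin 0 (Set.Ioi 0)) (nhds (L + K)) :=
      (hslope.mono_left (nhdsWithin_mono _ hIoi)).add tendsto_const_nhds
    refine h1.congr' ?_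
    filter_upwards [self_mem_nhdsWithin] with t ht
    rw [hQ t, abs_of_pos ht, div_self (ne_of_gt ht), one_mul]
  have hleft : Tendsto (fun t : ℝ => (f (θhat + t • u) - f θhat) / t)
      (nhdsWithin 0 (Set.Iio 0)) (nhds (L - K)) := by
    have h1 : Tendsto (fun t : ℝ => (G t - G 0) / t + (-K))
        (nhdsWithin 0 (Set.Iio 0)) (nhds (L + (-K))) :=
      (hslope.mono_left (nhdsWithin_mono _ hIio)).add tendsto_const_nhds
    have h2 : Tendsto (fun t : ℝ => (G t - G 0) / t + (-K))
        (nhdsWithin 0 (Set.Iio 0)) (nhds (L - K)) := by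
      simpa [sub_eq_add_neg] using h1
    refine h2.congr' ?_
    filter_upwards [self_mem_nhdsWithin] with t ht
    rw [hQ t, abs_of_neg ht, neg_div, div_self (ne_of_lt ht)]
    ring
  constructor
  · rintro ⟨d, hd⟩ j hj
    have hdr : d = L + K :=
      tendsto_nhds_unique (hd.mono_left (nhdsWithin_mono _ hIoi)) hright
    have hdl : d = L - K :=
      tendsto_nhds_unique (hd.mono_left (nhdsWithin_mono _ hIio)) hleft
    have hK0 : K = 0 := by linarith
    -- both parts of K are nonnegative, so the ℓ1 part vanishes
    have hpart2 : (0:ℝ) ≤ ∑ m ∈ Finset.univ.filter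
          (fun m => (∑ j, if g j = m then (θhat j) ^ 2 else 0) = 0),
          lam m * Real.sqrt (∑ j, if g j = m then (u j) ^ 2 else 0) :=
      Finset.sum_nonneg fun m _ => mul_nonneg (le_of_lt (hlam m)) (Real.sqrt_nonneg _)
    have hpart1 : (0:ℝ) ≤ ∑ j ∈ Finset.univ.filter (fun j => θhat j = 0), |u j| :=
      Finset.sum_nonneg fun j _ => abs_nonneg _
    have hsum0 : ∑ j ∈ Finset.univ.filter (fun j => θhat j = 0), |u j| = 0 := by
      nlinarith [hK.symm.trans hK0]
    have := (Finset.sum_eq_zero_iff_of_nonneg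
      (fun j _ => abs_nonneg (u j))).mp hsum0 j
      (Finset.mem_filter.mpr ⟨Finset.mem_univ j, hj⟩)
    exact abs_eq_zero.mp this
  · intro hu
    have hK0 : K = 0 := by
      rw [hK]
      have h1 : ∑ j ∈ Finset.univ.filter (fun j => θhat j = 0), |u j| = 0 :=
        Finset.sum_eq_zero fun j hj => by
          rw [hu j (Finset.mem_filter.mp hj).2, abs_zero]
      have h2 : ∑ m ∈ Finset.univ.filter
          (fun m => (∑ j, if g j = m then (θhat j) ^ 2 else 0) = 0),
          lam m * Real.sqrt (∑ j, if g j = m then (u j) ^ 2 else 0) = 0 :=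
        Finset.sum_eq_zero fun m hm => by
          have hm0 := (Finset.mem_filter.mp hm).2
          have : (∑ j, if g j = m then (u j) ^ 2 else 0) = 0 :=
            Finset.sum_eq_zero fun j _ => by
              by_cases h : g j = m
              · rw [hu j (hzgrp m hm0 j h)]; simp [h]
              · simp [h]
          rw [this, Real.sqrt_zero, mul_zero]
      rw [h1, h2, mul_zero, add_zero]
    refine ⟨L, ?_⟩
    refine hslope.congr fun t => ?_
    rw [hQ t, hK0, mul_zero, add_zero]
end

section
/- Let f(θ, λ) = g(θ) + λh(θ) where g is m-strongly convex and twice continuously differentiable on ℝ^p, h is convex and twice continuously differentiable on an open set containing the solution path, and λ > 0. Let θ̂(λ) denote the unique minimizer. If θ̂ is differentiable at λ, then d/dλ [ h(θ̂(λ)) ] = ∇h(θ̂(λ))ᵀ θ̂'(λ) ≤ 0; that is, the penalty value h(θ̂(λ)) is non-increasing in λ. -/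
open Filter

/-- Let `f(θ, λ) = g(θ) + λ h(θ)` with `g` `m`-strongly convex and `C²`, `h`
convex and `C²` on an open set containing the solution path, and `λ > 0`. If `θ̂(λ)` is the
unique minimizer and `θ̂` is differentiable at `λ`, then
`d/dλ [h(θ̂(λ))] = ∇h(θ̂(λ))ᵀ θ̂'(λ) ≤ 0`: the penalty value is non-increasing in `λ`. -/
theorem penalty_value_nonincreasing {p : ℕ} (m : ℝ) (hm : 0 < m)
    (g h : EuclideanSpace ℝ (Fin p) → ℝ)
    (hg_conv : StrongConvexOn Set.univ m g) (hg_smooth : ContDiff ℝ 2 g)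
    (hh_conv : ConvexOn ℝ Set.univ h)
    (θhat : ℝ → EuclideanSpace ℝ (Fin p))
    (O : Set (EuclideanSpace ℝ (Fin p))) (hO : IsOpen O)
    (hpath : ∀ t : ℝ, 0 < t → θhat t ∈ O)
    (hh_smooth : ContDiffOn ℝ 2 h O)
    (hmin : ∀ t : ℝ, 0 < t → IsMinOn (fun θ => g θ + t * h θ) Set.univ (θhat t))
    (lam : ℝ) (hlam : 0 < lam)
    (θ' : EuclideanSpace ℝ (Fin p))
    (hdiff : HasDerivAt θhat θ' lam) :
    HasDerivAt (fun t => h (θhat t)) (fderiv ℝ h (θhat lam) θ') lam ∧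
    fderiv ℝ h (θhat lam) θ' ≤ 0 := by
  -- h is differentiable at θhat lam
  have hmem : θhat lam ∈ O := hpath lam hlam
  have hdh : DifferentiableAt ℝ h (θhat lam) := by
    have := (hh_smooth.contDiffAt (hO.mem_nhds hmem)).differentiableAt (by norm_num)
    exact this
  set d := fderiv ℝ h (θhat lam) θ' with hd
  have hchain : HasDerivAt (fun t => h (θhat t)) d lam :=
    (hdh.hasFDerivAt).comp_hasDerivAt lam hdiff
  refine ⟨hchain, ?_⟩
  -- exchange argument: h ∘ θhat is antitone on (0, ∞)
  have anti : ∀ s t : ℝ, 0 < s → s < t → h (θhat t) ≤ h (θhat s) := by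
    intro s t hs hst
    have ht : 0 < t := hs.trans hst
    have h1 : g (θhat s) + s * h (θhat s) ≤ g (θhat t) + s * h (θhat t) :=
      hmin s hs (Set.mem_univ (θhat t))
    have h2 : g (θhat t) + t * h (θhat t) ≤ g (θhat s) + t * h (θhat s) :=
      hmin t ht (Set.mem_univ (θhat s))
    nlinarith
  -- slope ≤ 0 on the right, so derivative ≤ 0
  have hslope : Tendsto (slope (fun t => h (θhat t)) lam) (nhdsWithin lam (Set.Ioi lam)) (nhds d) := by
    have := hchain.hasDerivWithinAt (s := Set.Ioi lam)
    rw [hasDerivWithinAt_iff_tendsto_slope] at this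
    refine this.mono_left (nhdsWithin_mono _ ?_)
    intro x hx
    exact ⟨hx, ne_of_gt hx⟩
  refine le_of_tendsto hslope ?_
  filter_upwards [self_mem_nhdsWithin] with t ht
  have hlt : lam < t := ht
  have hle : h (θhat t) ≤ h (θhat lam) := anti lam t hlam hlt
  rw [slope_def_field]
  apply div_nonpos_of_nonpos_of_nonneg <;> linarith
end
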